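/- Let n ≥ 1 and A : Fin n → Fin n → Bool. Consider the matrix over the multivariate polynomial ring MvPolynomial (Fin n × Fin n) ℤ whose (i,j) entry is the variable X (i,j) if A i j = true and 0 otherwise. Then the determinant of this matrix is nonzero (as a polynomial) if and only if there exists a permutation σ of Fin n with A i (σ i) = true for all i (i.e., the bipartite graph with biadjacency matrix A has a perfect matching). -/

import Mathlib

open MvPolynomial Finset

private lemma prod_monomial_one' {ι σ : Type*} [DecidableEq σ]
    (s : Finset ι) (f : ι → (σ →₀ ℕ)) :
    ∏ i ∈ s, (monomial (f i) (1:ℤ)) = monomial (∑ i ∈ s, f i) 1 := by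
  classical
  induction s using Finset.cons_induction with
  | empty => simp
  | cons a s ha ih =>
      rw [Finset.prod_cons, Finset.sum_cons, ih, monomial_mul, one_mul]

private lemma sum_single_inj' {n : ℕ} (f g : Fin n → Fin n)
    (h : (∑ i, Finsupp.single (i, f i) (1:ℕ)) = ∑ i, Finsupp.single (i, g i) 1) :
    f = g := by
  funext j
  have h1 := congrFun (congrArg (DFunLike.coe) h) (j, f j)
  have e1 : ∀ i : Fin n, ((i, f i) = (j, f j)) ↔ i = j := by
    intro i
    constructor
    · intro hh; exact (Prod.ext_iff.mp hh).1
    · rintro rfl; rfl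
  have e2 : ∀ i : Fin n, ((i, g i) = (j, f j)) ↔ (i = j ∧ g j = f j) := by
    intro i
    constructor
    · intro hh
      simp only [Prod.mk.injEq] at hh
      exact ⟨hh.1, hh.1 ▸ hh.2⟩
    · rintro ⟨rfl, hh⟩; simp [hh]
  simp only [Finsupp.finset_sum_apply, Finsupp.single_apply, e1, e2] at h1
  by_contra hne
  have hne' : g j ≠ f j := fun hh => hne hh.symm
  simp [Finset.sum_ite_eq', hne'] at h1

theorem det_symbolic_ne_zero_iff_perfectMatching (n : ℕ) (hn : 1 ≤ n)
    (A : Fin n → Fin n → Bool) :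
    (Matrix.of fun i j : Fin n =>
        if A i j then (MvPolynomial.X (i, j) : MvPolynomial (Fin n × Fin n) ℤ)
        else 0).det ≠ 0 ↔
      ∃ σ : Equiv.Perm (Fin n), ∀ i : Fin n, A i (σ i) = true := by
  classical
  set M : Matrix (Fin n) (Fin n) (MvPolynomial (Fin n × Fin n) ℤ) :=
    Matrix.of fun i j : Fin n =>
      if A i j then (MvPolynomial.X (i, j) : MvPolynomial (Fin n × Fin n) ℤ)
      else 0 with hM
  constructor
  · intro h
    by_contra hc
    push_neg at hc
    apply h
    rw [Matrix.det_apply]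
    refine Finset.sum_eq_zero fun σ _ => ?_
    obtain ⟨i, hi⟩ := hc σ⁻¹
    have hz : M (σ (σ⁻¹ i)) (σ⁻¹ i) = 0 := by
      simpa [hM, Equiv.Perm.inv_def] using hi
    refine smul_eq_zero_of_right _ ?_
    exact Finset.prod_eq_zero (Finset.mem_univ (σ⁻¹ i)) hz
  · rintro ⟨σ, hσ⟩
    intro h0
    have key : MvPolynomial.coeff (∑ i, Finsupp.single (i, σ i) 1) M.det
        = ((Equiv.Perm.sign σ⁻¹ : ℤˣ) : ℤ) := by
      rw [Matrix.det_apply, MvPolynomial.coeff_sum]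
      rw [Finset.sum_eq_single σ⁻¹]
      · rw [MvPolynomial.coeff_smul]
        have hprod : ∏ i, M (σ⁻¹ i) i
            = monomial (∑ i, Finsupp.single (i, σ i) 1) (1:ℤ) := by
          have h1 : ∀ i : Fin n, M (σ⁻¹ i) i = X (σ⁻¹ i, i) := by
            intro i
            have : A (σ⁻¹ i) i = true := by
              have := hσ (σ⁻¹ i); rwa [Equiv.Perm.inv_def, Equiv.apply_symm_apply] at this
            simp only [Equiv.Perm.inv_def] at this; simp [hM, this]
          rw [Finset.prod_congr rfl fun i _ => h1 i]
          have h2 : ∀ i : Fin n, (X (σ⁻¹ i, i) : MvPolynomial (Fin n × Fin n) ℤ)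
              = monomial (Finsupp.single (σ⁻¹ i, i) 1) 1 := fun i => rfl
          rw [Finset.prod_congr rfl fun i _ => h2 i, prod_monomial_one']
          have hsum : (∑ i : Fin n, Finsupp.single ((σ⁻¹ i : Fin n), i) (1:ℕ))
              = ∑ i : Fin n, Finsupp.single (i, σ i) 1 := by
            refine Fintype.sum_equiv σ⁻¹ _ _ fun j => ?_
            simp
          rw [hsum]
        rw [hprod, MvPolynomial.coeff_monomial, if_pos rfl]
        simp [Units.smul_def]
      · intro τ _ hτ
        rw [MvPolynomial.coeff_smul]
        refine smul_eq_zero_of_right _ ?_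
        by_cases hA : ∀ i : Fin n, A (τ i) i = true
        · have hprod : ∏ i, M (τ i) i
              = monomial (∑ i, Finsupp.single (i, τ⁻¹ i) 1) (1:ℤ) := by
            have h1 : ∀ i : Fin n, M (τ i) i
                = monomial (Finsupp.single (τ i, i) 1) 1 := by
              intro i; simp [hM, hA i]; rfl
            rw [Finset.prod_congr rfl fun i _ => h1 i, prod_monomial_one']
            have hsum : (∑ i : Fin n, Finsupp.single ((τ i : Fin n), i) (1:ℕ))
                = ∑ i : Fin n, Finsupp.single (i, τ⁻¹ i) 1 := by
              refine Fintype.sum_equiv τ _ _ fun j => ?_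
              simp
            rw [hsum]
          rw [hprod, MvPolynomial.coeff_monomial, if_neg]
          intro heq
          have : τ⁻¹ = (σ : Equiv.Perm (Fin n)) := by
            have hfun : (fun i => τ⁻¹ i) = fun i => σ i :=
              sum_single_inj' _ _ heq
            exact Equiv.ext fun i => congrFun hfun i
          exact hτ (by rw [← this, inv_inv])
        · push_neg at hA
          obtain ⟨i, hi⟩ := hA
          have hz : M (τ i) i = 0 := by simp [hM, hi]
          have hz0 : (∏ x : Fin n, M (τ x) x) = 0 :=
            Finset.prod_eq_zero (Finset.mem_univ i) hz
          rw [hz0, MvPolynomial.coeff_zero]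
      · intro h; exact absurd (Finset.mem_univ _) h
    rw [h0] at key
    simp only [MvPolynomial.coeff_zero] at key
    exact Units.ne_zero (Equiv.Perm.sign σ⁻¹) (by exact_mod_cast key.symm)
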